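/- Let A → M be a regular Lie algebroid, with K = ker ρ_A, F = im ρ_A ⊆ TM, and ν = TM/F. Choose splittings A ≅ K ⊕ F and TM ≅ ν ⊕ F; let [·,·]_K be the induced bracket on Γ(K), let ∇^K be the F-connection on K and B ∈ Ω²(F; K) defined by [φ, k]_A = ∇^K_φ k and [φ, φ′]_A = B(φ, φ′) + [φ, φ′]_{TM} for φ, φ′ ∈ Γ(F), k ∈ Γ(K); let ∇̃^K be an extension of ∇^K to a TM-connection on K with curvature R̃^K; let ∇^F be the ν-connection on F with ∇^F_ψ φ the F-component of [ψ, φ], extended to a TM-connection ∇̃^F on F. Define, for X, Y ∈ Γ(A) with components X_K, Y_K ∈ Γ(K), X_F, Y_F ∈ Γ(F), and ψ ∈ Γ(ν): Ω_{X,Y}ψ = [∇̃^K_ψ X_K, Y_K]_K + [X_K, ∇̃^K_ψ Y_K]_K − ∇̃^K_ψ [X_K, Y_K]_K + R̃^K_{X_F, ψ} Y_K − R̃^K_{Y_F, ψ} X_K + ∇̃^K_ψ B(X_F, Y_F) − B(∇̃^F_ψ X_F, Y_F) − B(X_F, ∇̃^F_ψ Y_F). Then Ω_{X,Y}ψ vanishes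 for all X, Y ∈ Γ(A) and ψ ∈ Γ(ν) if and only if: (1) ∇̃^K_ψ is a derivation of the bracket [·,·]_K for all ψ ∈ Γ(ν); (2) R̃^K_{φ, ψ} = 0 for all φ ∈ Γ(F) and ψ ∈ Γ(ν); and (3) B(∇̃^F_ψ φ, φ′) + B(φ, ∇̃^F_ψ φ′) − ∇̃^K_ψ B(φ, φ′) = 0 for all φ, φ′ ∈ Γ(F) and ψ ∈ Γ(ν). -/
import Mathlib


/-!
STATEMENT 18:  Let `A → M` be a regular Lie algebroid with `K = ker ρ_A`,
`F = im ρ_A ⊆ TM`, `ν = TM/F`, and choose splittings `A ≅ K ⊕ F` and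
`TM ≅ ν ⊕ F`.  With the induced bracket `[·,·]_K` on `Γ(K)`, the
`F`-connection `∇ᴷ` on `K` and the form `B ∈ Ω²(F; K)` (defined by
`[φ, k]_A = ∇ᴷ_φ k` and `[φ, φ′]_A = B(φ,φ′) + [φ,φ′]_{TM}`), a chosen
extension `∇̃ᴷ` of `∇ᴷ` to a `TM`-connection on `K` with curvature `R̃ᴷ`,
and a chosen extension `∇̃ᶠ` of the `ν`-connection `∇ᶠ` on `F` to a
`TM`-connection, define for `X, Y ∈ Γ(A)` (with components
`X_K, X_F`) and `ψ ∈ Γ(ν)`: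
`Ω_{X,Y}ψ = [∇̃ᴷ_ψ X_K, Y_K]_K + [X_K, ∇̃ᴷ_ψ Y_K]_K − ∇̃ᴷ_ψ[X_K, Y_K]_K
 + R̃ᴷ_{X_F,ψ} Y_K − R̃ᴷ_{Y_F,ψ} X_K + ∇̃ᴷ_ψ B(X_F,Y_F)
 − B(∇̃ᶠ_ψ X_F, Y_F) − B(X_F, ∇̃ᶠ_ψ Y_F)`.
Then `Ω_{X,Y}ψ = 0` for all `X, Y, ψ` iff
(1) `∇̃ᴷ_ψ` is a derivation of `[·,·]_K`,
(2) `R̃ᴷ_{φ,ψ} = 0` for `φ ∈ Γ(F)`, `ψ ∈ Γ(ν)`, and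
(3) `B(∇̃ᶠ_ψ φ, φ′) + B(φ, ∇̃ᶠ_ψ φ′) − ∇̃ᴷ_ψ B(φ, φ′) = 0`.

Algebraic (section-level) model: `R` is the ring of functions on `M`,
vector fields on `M` are derivations of `R`, `K`, `F`, `ν` are the modules
of sections, `ιF`, `ιν` realize the splitting `TM ≅ ν ⊕ F`, and an element
`X ∈ Γ(A)` is a pair `(X_K, X_F) ∈ K × F` via the splitting `A ≅ K ⊕ F`.
-/

section
variable {R K F ν : Type} [CommRing R]
  [AddCommGroup K] [Module R K] [AddCommGroup F] [Module R F]
  [AddCommGroup ν] [Module R ν]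

/-- Vector fields on the base, modelled as derivations of `R`. -/
abbrev VF (R : Type) [CommRing R] := Derivation ℤ R R

/-- Curvature of a `TM`-connection. -/
def curv (nk : VF R → K → K) (δ₁ δ₂ : VF R) (k : K) : K :=
  nk δ₁ (nk δ₂ k) - nk δ₂ (nk δ₁ k) - nk ⁅δ₁, δ₂⁆ k

/-- The upper-left block `Ω_{X,Y}ψ` of the form `Ω` of the adjoint
`VB`-algebroid `TA`, for the `TM`-connection on `A` built from `∇̃ᴷ`, `∇̃ᶠ`
and `B`. -/
def OmTA (brK : K → K → K) (nK : VF R → K → K) (nF : VF R → F → F)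
    (B : F → F → K) (ιF : F →ₗ[R] VF R) (ιν : ν →ₗ[R] VF R)
    (X Y : K × F) (ψ : ν) : K :=
  brK (nK (ιν ψ) X.1) Y.1 + brK X.1 (nK (ιν ψ) Y.1) - nK (ιν ψ) (brK X.1 Y.1)
    + curv nK (ιF X.2) (ιν ψ) Y.1 - curv nK (ιF Y.2) (ιν ψ) X.1
    + nK (ιν ψ) (B X.2 Y.2) - B (nF (ιν ψ) X.2) Y.2 - B X.2 (nF (ιν ψ) Y.2)

theorem omega_block_vanishing_criterion
    (brK : K → K → K) (nK : VF R → K → K) (nF : VF R → F → F)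
    (B : F → F → K) (ιF : F →ₗ[R] VF R) (ιν : ν →ₗ[R] VF R)
    -- bilinearity/alternation of the leafwise bracket and of `B`
    (hbrK_add_left : ∀ k k' k'', brK (k + k') k'' = brK k k'' + brK k' k'')
    (hbrK_add_right : ∀ k k' k'', brK k (k' + k'') = brK k k' + brK k k'')
    (hbrK_alt : ∀ k, brK k k = 0)
    (hB_add_left : ∀ f f' f'', B (f + f') f'' = B f f'' + B f' f'')
    (hB_add_right : ∀ f f' f'', B f (f' + f'') = B f f' + B f f'')
    (hB_alt : ∀ f, B f f = 0)
    -- the extensions `∇̃ᴷ`, `∇̃ᶠ` are connections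
    (hnK_add_left : ∀ δ δ' k, nK (δ + δ') k = nK δ k + nK δ' k)
    (hnK_add_right : ∀ δ k k', nK δ (k + k') = nK δ k + nK δ k')
    (hnK_leibniz : ∀ δ (f : R) k, nK δ (f • k) = f • nK δ k + δ f • k)
    (hnF_add_left : ∀ δ δ' φ, nF (δ + δ') φ = nF δ φ + nF δ' φ)
    (hnF_add_right : ∀ δ φ φ', nF δ (φ + φ') = nF δ φ + nF δ φ')
    (hnF_leibniz : ∀ δ (f : R) φ, nF δ (f • φ) = f • nF δ φ + δ f • φ) :
    (∀ (X Y : K × F) (ψ : ν), OmTA brK nK nF B ιF ιν X Y ψ = 0) ↔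
      ((∀ (ψ : ν) (k k' : K),
          nK (ιν ψ) (brK k k') = brK (nK (ιν ψ) k) k' + brK k (nK (ιν ψ) k')) ∧
       (∀ (φ : F) (ψ : ν) (k : K), curv nK (ιF φ) (ιν ψ) k = 0) ∧
       (∀ (ψ : ν) (φ φ' : F),
          B (nF (ιν ψ) φ) φ' + B φ (nF (ιν ψ) φ') - nK (ιν ψ) (B φ φ') = 0)) := by
  -- basic zero lemmas
  have hbrK0l : ∀ k, brK 0 k = 0 := fun k => by
    have := hbrK_add_left 0 0 k; simpa using this.symm
  have hbrK0r : ∀ k, brK k 0 = 0 := fun k => by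
    have := hbrK_add_right k 0 0; simpa using this.symm
  have hB0l : ∀ f, B 0 f = 0 := fun f => by
    have := hB_add_left 0 0 f; simpa using this.symm
  have hB0r : ∀ f, B f 0 = 0 := fun f => by
    have := hB_add_right f 0 0; simpa using this.symm
  have hnK0l : ∀ k, nK 0 k = 0 := fun k => by
    have := hnK_add_left 0 0 k; simpa using this.symm
  have hnK0r : ∀ δ, nK δ 0 = 0 := fun δ => by
    have := hnK_add_right δ 0 0; simpa using this.symm
  have hnF0r : ∀ δ, nF δ 0 = 0 := fun δ => by
    have := hnF_add_right δ 0 0; simpa using this.symm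
  have hcurv0 : ∀ (δ : VF R) (k : K), curv nK 0 δ k = 0 := fun δ k => by
    simp [curv, hnK0l, hnK0r]
  have hcurv0k : ∀ (δ₁ δ₂ : VF R), curv nK δ₁ δ₂ 0 = 0 := fun δ₁ δ₂ => by
    simp [curv, hnK0r]
  constructor
  · intro h
    refine ⟨?_, ?_, ?_⟩
    · intro ψ k k'
      have := h (k, 0) (k', 0) ψ
      simp only [OmTA, map_zero, hcurv0, hB0l, hB0r, hnF0r, hnK0r, add_zero,
        sub_zero] at this
      rw [sub_eq_zero] at this
      exact this.symm
    · intro φ ψ k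
      have := h (0, φ) (k, 0) ψ
      simpa [OmTA, map_zero, hcurv0, hB0l, hB0r, hnF0r, hnK0r, hnK0l,
        hbrK0l, hbrK0r] using this
    · intro ψ φ φ'
      have := h (0, φ) (0, φ') ψ
      simp only [OmTA, map_zero, hcurv0, hcurv0k, hB0l, hB0r, hnF0r, hnK0r, hnK0l,
        hbrK0l, hbrK0r, add_zero, zero_add, sub_zero, zero_sub] at this
      have h2 : B (nF (ιν ψ) φ) φ' + B φ (nF (ιν ψ) φ') - nK (ιν ψ) (B φ φ')
          = -(nK (ιν ψ) (B φ φ') - B (nF (ιν ψ) φ) φ' - B φ (nF (ιν ψ) φ')) := by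
        abel
      rw [h2, this, neg_zero]
  · rintro ⟨h1, h2, h3⟩ X Y ψ
    have hb := h3 ψ X.2 Y.2
    have hb' : nK (ιν ψ) (B X.2 Y.2) - B (nF (ιν ψ) X.2) Y.2
        - B X.2 (nF (ιν ψ) Y.2) = 0 := by
      rw [show nK (ιν ψ) (B X.2 Y.2) - B (nF (ιν ψ) X.2) Y.2
          - B X.2 (nF (ιν ψ) Y.2)
          = -(B (nF (ιν ψ) X.2) Y.2 + B X.2 (nF (ιν ψ) Y.2)
            - nK (ιν ψ) (B X.2 Y.2)) by abel, hb, neg_zero]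
    simp only [OmTA, h1, h2]
    rw [show brK (nK (ιν ψ) X.1) Y.1 + brK X.1 (nK (ιν ψ) Y.1)
        - (brK (nK (ιν ψ) X.1) Y.1 + brK X.1 (nK (ιν ψ) Y.1)) + 0 - 0
        + nK (ιν ψ) (B X.2 Y.2) - B (nF (ιν ψ) X.2) Y.2 - B X.2 (nF (ιν ψ) Y.2)
        = nK (ιν ψ) (B X.2 Y.2) - B (nF (ιν ψ) X.2) Y.2
          - B X.2 (nF (ιν ψ) Y.2) by abel, hb']

end
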